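/- With the notation of the previous statement (K, F compact, f, G continuous, J(x) = min_{w∈F} G(x,w), S_ε = {(x,y) ∈ K : y ∈ F, G(x,y) - J(x) ≤ ε}, val(ε) = inf_{S_ε} f, S₀ ≠ ∅), the function ε ↦ val(ε) is nonincreasing, lower semicontinuous, and right-continuous on [0,∞). -/

import Mathlib

open Set Filter Topology

theorem stmt15 {n m : ℕ}
    (K : Set (EuclideanSpace ℝ (Fin n) × EuclideanSpace ℝ (Fin m)))
    (F : Set (EuclideanSpace ℝ (Fin m)))
    (hK : IsCompact K) (hF : IsCompact F) (hFne : F.Nonempty)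
    (f G : EuclideanSpace ℝ (Fin n) × EuclideanSpace ℝ (Fin m) → ℝ)
    (hf : Continuous f) (hG : Continuous G)
    (J : EuclideanSpace ℝ (Fin n) → ℝ)
    (hJ : ∀ x, IsLeast ((fun w => G (x, w)) '' F) (J x))
    (S : ℝ → Set (EuclideanSpace ℝ (Fin n) × EuclideanSpace ℝ (Fin m)))
    (hS : ∀ ε, S ε = {p ∈ K | p.2 ∈ F ∧ G p - J p.1 ≤ ε})
    (val : ℝ → ℝ) (hval : ∀ ε, val ε = sInf (f '' S ε))
    (hS0 : (S 0).Nonempty) :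
    AntitoneOn val (Ici 0) ∧
    LowerSemicontinuousOn val (Ici 0) ∧
    ∀ ε ∈ Ici (0 : ℝ), ContinuousWithinAt val (Ici ε) ε := by
  -- J is continuous
  have hJcont : Continuous J := by
    have h1 : Continuous fun x => sInf ((fun w => G (x, w)) '' F) :=
      hF.continuous_sInf (f := fun x w => G (x, w)) (by exact hG)
    convert h1 using 1
    ext x
    exact (hJ x).csInf_eq.symm
  -- continuity of the constraint function
  have hgap : Continuous fun p : EuclideanSpace ℝ (Fin n) × EuclideanSpace ℝ (Fin m) =>
      G p - J p.1 := hG.sub (hJcont.comp continuous_fst)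
  -- S ε is compact
  have hScpt : ∀ ε, IsCompact (S ε) := by
    intro ε
    have hclosed : IsClosed (S ε) := by
      rw [hS]
      have heq : {p ∈ K | p.2 ∈ F ∧ G p - J p.1 ≤ ε}
          = K ∩ ((Prod.snd ⁻¹' F) ∩ ((fun p => G p - J p.1) ⁻¹' Iic ε)) := by
        ext p; simp only [mem_setOf_eq, mem_inter_iff, mem_preimage, mem_Iic]
      rw [heq]
      exact hK.isClosed.inter ((hF.isClosed.preimage continuous_snd).inter
        (isClosed_Iic.preimage hgap))
    exact hK.of_isClosed_subset hclosed (by rw [hS]; exact fun p hp => hp.1)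
  -- monotonicity of S
  have hSmono : ∀ ⦃a b : ℝ⦄, a ≤ b → S a ⊆ S b := by
    intro a b hab
    rw [hS, hS]
    exact fun p hp => ⟨hp.1, hp.2.1, hp.2.2.trans hab⟩
  have hSne : ∀ ε ∈ Ici (0:ℝ), (S ε).Nonempty := fun ε hε => hS0.mono (hSmono hε)
  -- val ε is attained
  have hleast : ∀ ε ∈ Ici (0:ℝ), IsLeast (f '' S ε) (val ε) := by
    intro ε hε
    have hcpt : IsCompact (f '' S ε) := (hScpt ε).image hf
    have hne : (f '' S ε).Nonempty := (hSne ε hε).image f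
    rw [hval]
    exact ⟨hcpt.sInf_mem hne, fun y hy => csInf_le hcpt.bddBelow hy⟩
  -- antitone
  have hanti : AntitoneOn val (Ici 0) := by
    intro a ha b hb hab
    rw [hval a, hval b]
    exact csInf_le_csInf (((hScpt b).image hf).bddBelow)
      ((hSne a ha).image f) (image_mono (hSmono hab))
  -- lower semicontinuity
  have hlsc : LowerSemicontinuousOn val (Ici 0) := by
    intro ε hε c hc
    by_contra hcon
    rw [Filter.not_eventually] at hcon
    have hnb : (𝓝[Ici (0:ℝ)] ε ⊓ 𝓟 {x | ¬ c < val x}).NeBot :=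
      Filter.frequently_iff_neBot.mp hcon
    haveI := hnb
    obtain ⟨u, hu⟩ := Filter.exists_seq_tendsto (𝓝[Ici (0:ℝ)] ε ⊓ 𝓟 {x | ¬ c < val x})
    have htε : Tendsto u atTop (𝓝 ε) :=
      hu.mono_right ((inf_le_left).trans nhdsWithin_le_nhds)
    have hu0 : ∀ᶠ k in atTop, u k ∈ Ici (0:ℝ) :=
      (hu.mono_right inf_le_left).eventually eventually_mem_nhdsWithin
    have huc : ∀ᶠ k in atTop, val (u k) ≤ c := by
      have := (hu.mono_right inf_le_right).eventually
        (Filter.eventually_principal.mpr (fun x hx => hx))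
      exact this.mono fun k hk => not_lt.mp hk
    obtain ⟨N, hN⟩ := Filter.eventually_atTop.mp (hu0.and huc)
    set v : ℕ → ℝ := fun k => u (k + N) with hv
    have hv0 : ∀ k, v k ∈ Ici (0:ℝ) := fun k => (hN (k + N) (Nat.le_add_left N k)).1
    have hvc : ∀ k, val (v k) ≤ c := fun k => (hN (k + N) (Nat.le_add_left N k)).2
    have htv : Tendsto v atTop (𝓝 ε) := htε.comp (tendsto_add_atTop_nat N)
    -- choose minimizers
    have hpick : ∀ k, ∃ q ∈ S (v k), f q = val (v k) := fun k => (hleast _ (hv0 k)).1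
    choose p hpS hpf using hpick
    have hpK : ∀ k, p k ∈ K := fun k => by
      have := hpS k; rw [hS] at this; exact this.1
    obtain ⟨q, hqK, φ, hφ, hqt⟩ := hK.tendsto_subseq hpK
    have hqF : q.2 ∈ F := by
      refine hF.isClosed.mem_of_tendsto ((continuous_snd.tendsto q).comp hqt)
        (Filter.Eventually.of_forall fun k => ?_)
      have := hpS (φ k); rw [hS] at this; exact this.2.1
    have hqgap : G q - J q.1 ≤ ε := by
      refine le_of_tendsto_of_tendsto' ((hgap.tendsto q).comp hqt)
        (htv.comp hφ.tendsto_atTop) (fun k => ?_)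
      have := hpS (φ k); rw [hS] at this; exact this.2.2
    have hqS : q ∈ S ε := by rw [hS]; exact ⟨hqK, hqF, hqgap⟩
    have h1 : val ε ≤ f q := (hleast ε hε).2 ⟨q, hqS, rfl⟩
    have h2 : f q ≤ c := by
      refine le_of_tendsto ((hf.tendsto q).comp hqt)
        (Filter.Eventually.of_forall fun k => ?_)
      show f (p (φ k)) ≤ c
      rw [hpf (φ k)]
      exact hvc (φ k)
    exact absurd (hc.trans_le (h1.trans h2)) (lt_irrefl c)
  refine ⟨hanti, hlsc, fun ε hε => ?_⟩
  -- right continuity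
  rw [ContinuousWithinAt]
  rw [tendsto_order]
  constructor
  · intro c hc
    have h := hlsc ε hε c hc
    exact h.filter_mono (nhdsWithin_mono ε (Ici_subset_Ici.mpr hε))
  · intro d hd
    filter_upwards [eventually_mem_nhdsWithin] with x hx
    exact (hanti hε (mem_Ici.mpr (le_trans (mem_Ici.mp hε) (mem_Ici.mp hx))) hx).trans_lt hd
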